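/- Let p₁, p₂, p₃, p₄ be four distinct points in ℝ² and let L be a finite family of affine lines in ℝ², none of which contains any of the four points. For each line ℓ ∈ L, the two open half-planes bounded by ℓ partition {p₁,p₂,p₃,p₄} and, when both parts are nonempty, induce a proper split of the 4-element point set. Then the number of distinct proper splits of {p₁,p₂,p₃,p₄} induced by the lines of L is at most 6. -/

import Mathlib

open Set

/-- The plane. -/
abbrev Plane : Type := ℝ × ℝ

/-! ### Splits -/

/-- A split of a type `α` is an unordered pair `{A, B}` of disjoint nonempty subsets
covering `α`. -/
def IsSplit {α : Type} (s : Set (Set α)) : Prop :=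
  ∃ A B : Set α, A.Nonempty ∧ B.Nonempty ∧ Disjoint A B ∧ A ∪ B = Set.univ ∧ s = {A, B}

/-- The split system induced on a subset `Y`: restrict each split `{A, B} ∈ S` to
`{A ∩ Y, B ∩ Y}` provided both intersections are nonempty. -/
def restrictSystem {α : Type} (S : Set (Set (Set α))) (Y : Set α) : Set (Set (Set α)) :=
  { s | ∃ A B : Set α, {A, B} ∈ S ∧ (A ∩ Y).Nonempty ∧ (B ∩ Y).Nonempty ∧
        s = {A ∩ Y, B ∩ Y} }

/-! ### Pseudolines and arrangements -/

/-- A pseudoline is the image of a proper topological embedding of `ℝ` into the plane. -/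
def IsPseudoline (L : Set Plane) : Prop :=
  ∃ f : ℝ → Plane, IsProperMap f ∧ Function.Injective f ∧ Set.range f = L

/-- `U` and `V` are the two sides (connected components of the complement) of the
pseudoline `L`. -/
def IsSidePair (L U V : Set Plane) : Prop :=
  IsOpen U ∧ IsOpen V ∧ U.Nonempty ∧ V.Nonempty ∧
  IsPreconnected U ∧ IsPreconnected V ∧ Disjoint U V ∧ U ∪ V = Lᶜ

/-- Two pseudolines cross: they meet in exactly one point and each meets both sides of
the other. -/
def Crosses (L₁ L₂ : Set Plane) : Prop :=
  (∃! p, p ∈ L₁ ∩ L₂) ∧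
  (∀ U V, IsSidePair L₁ U V → (L₂ ∩ U).Nonempty ∧ (L₂ ∩ V).Nonempty) ∧
  (∀ U V, IsSidePair L₂ U V → (L₁ ∩ U).Nonempty ∧ (L₁ ∩ V).Nonempty)

/-- An arrangement of pseudolines: a finite set of pairwise crossing pseudolines. -/
def IsArrangement (𝒜 : Set (Set Plane)) : Prop :=
  𝒜.Finite ∧ (∀ L ∈ 𝒜, IsPseudoline L) ∧
  ∀ L₁ ∈ 𝒜, ∀ L₂ ∈ 𝒜, L₁ ≠ L₂ → Crosses L₁ L₂

/-- A weak arrangement of pseudolines: any two members are disjoint or cross. -/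
def IsWeakArrangement (𝒜 : Set (Set Plane)) : Prop :=
  𝒜.Finite ∧ (∀ L ∈ 𝒜, IsPseudoline L) ∧
  ∀ L₁ ∈ 𝒜, ∀ L₂ ∈ 𝒜, L₁ ≠ L₂ → Disjoint L₁ L₂ ∨ Crosses L₁ L₂

/-- The split system induced on placed points `pos : α → Plane` by a collection of
pseudolines: each pseudoline both of whose sides contain placed points induces the
corresponding bipartition of `α`. -/
def InducedSplits {α : Type} (pos : α → Plane) (𝒜 : Set (Set Plane)) :
    Set (Set (Set α)) :=
  { s | ∃ L ∈ 𝒜, ∃ U V : Set Plane, IsSidePair L U V ∧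
        (pos ⁻¹' U).Nonempty ∧ (pos ⁻¹' V).Nonempty ∧
        s = {pos ⁻¹' U, pos ⁻¹' V} }

/-- A split system is flat if it is exactly the split system induced by some arrangement
of pseudolines on some injective placement of the points, none of which lies on a
pseudoline. -/
def IsFlat {α : Type} (S : Set (Set (Set α))) : Prop :=
  ∃ pos : α → Plane, Function.Injective pos ∧
    ∃ 𝒜 : Set (Set Plane), IsArrangement 𝒜 ∧
      (∀ x : α, ∀ L ∈ 𝒜, pos x ∉ L) ∧ InducedSplits pos 𝒜 = S

/-! ### Sign vectors and oriented matroids (via topes) -/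

/-- Composition of sign vectors: agrees with `V` where `V` is nonzero, with `U` elsewhere. -/
def SVcomp {α : Type} (V U : α → SignType) : α → SignType :=
  fun x => if V x = 0 then U x else V x

/-- `V` is a restriction of `U`. -/
def SVrestriction {α : Type} (V U : α → SignType) : Prop :=
  ∀ x, V x ≠ 0 → V x = U x

def SVsupport {α : Type} (T : α → SignType) : Set α := {x | T x ≠ 0}

def SVplus {α : Type} (T : α → SignType) : Set α := {x | T x = 1}

def SVminus {α : Type} (T : α → SignType) : Set α := {x | T x = -1}

/-- The tope axioms (T0), (T1), (T2) for a set of sign vectors. -/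
def IsTopeSet {α : Type} (𝒯 : Set (α → SignType)) : Prop :=
  𝒯.Nonempty ∧
  (∀ T ∈ 𝒯, -T ∈ 𝒯) ∧
  ∀ V : α → SignType, (∃ T ∈ 𝒯, SVrestriction V T) →
    (∃ T' ∈ 𝒯, SVcomp V T' ∈ 𝒯 ∧ SVcomp V (-T') ∉ 𝒯) ∨ (∀ T' ∈ 𝒯, SVcomp V T' ∈ 𝒯)

/-- Covectors of a tope set. -/
def Covectors {α : Type} (𝒯 : Set (α → SignType)) : Set (α → SignType) :=
  { Y | ∀ T ∈ 𝒯, SVcomp Y T ∈ 𝒯 }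

/-- Cocircuits: covectors with nonempty support, minimal with respect to inclusion of
supports among covectors with nonempty support. -/
def Cocircuits {α : Type} (𝒯 : Set (α → SignType)) : Set (α → SignType) :=
  { Y | Y ∈ Covectors 𝒯 ∧ (SVsupport Y).Nonempty ∧
        ∀ Z ∈ Covectors 𝒯, (SVsupport Z).Nonempty →
          SVsupport Z ⊆ SVsupport Y → SVsupport Z = SVsupport Y }

/-- The rank: least cardinality of a set intersecting the support of every cocircuit. -/
noncomputable def OMrank {α : Type} (𝒯 : Set (α → SignType)) : ℕ :=
  sInf { n | ∃ A : Set α, A.ncard = n ∧ ∀ C ∈ Cocircuits 𝒯, (A ∩ SVsupport C).Nonempty }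

/-- Loop-free: every tope has full support. -/
def OMLoopFree {α : Type} (𝒯 : Set (α → SignType)) : Prop :=
  ∀ T ∈ 𝒯, SVsupport T = Set.univ

/-- Acyclic: the all-`+` sign vector is a tope. -/
def OMAcyclic {α : Type} (𝒯 : Set (α → SignType)) : Prop :=
  (fun _ => 1) ∈ 𝒯

/-- A split system is encoded by a loop-free acyclic rank-3 oriented matroid on element
set `α` if each of its splits arises as the positive/negative parts of a tope. -/
def EncodedByOM3 {α : Type} (S : Set (Set (Set α))) : Prop :=
  ∃ 𝒯 : Set (α → SignType), IsTopeSet 𝒯 ∧ OMLoopFree 𝒯 ∧ OMAcyclic 𝒯 ∧ OMrank 𝒯 = 3 ∧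
    ∀ s ∈ S, ∃ T ∈ 𝒯, s = {SVplus T, SVminus T}

/-! ### Split networks -/

/-- A split network on a label set `α`: a finite connected simple graph, labelled by `α`,
which is a partial cube (isometric subgraph of a hypercube, with every coordinate used). -/
structure SplitNetwork (α : Type) where
  V : Type
  finV : Finite V
  G : SimpleGraph V
  conn : G.Connected
  lab : α → V
  k : ℕ
  f : V → Fin k → Bool
  inj : Function.Injective f
  iso : ∀ u v : V, G.dist u v = hammingDist (f u) (f v)
  flip : ∀ i : Fin k, ∃ u v : V, G.Adj u v ∧ f u i ≠ f v i

/-- The edge `{u,v}` belongs to the edge class `ε_i`: its endpoints differ exactly in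
coordinate `i`. -/
def SplitNetwork.InClass {α : Type} (N : SplitNetwork α) (i : Fin N.k) (u v : N.V) : Prop :=
  N.G.Adj u v ∧ ∀ j : Fin N.k, (N.f u j ≠ N.f v j ↔ j = i)

/-- The splits of `α` induced by the edge classes of the network. -/
def SplitNetwork.inducedSplits {α : Type} (N : SplitNetwork α) : Set (Set (Set α)) :=
  { s | ∃ i : Fin N.k,
      {x : α | N.f (N.lab x) i = true}.Nonempty ∧
      {x : α | N.f (N.lab x) i = false}.Nonempty ∧
      s = {{x : α | N.f (N.lab x) i = true}, {x : α | N.f (N.lab x) i = false}} }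

/-- The union of all (closed) edge segments of a drawing. -/
def SplitNetwork.edgeSegs {α : Type} (N : SplitNetwork α) (pos : N.V → Plane) : Set Plane :=
  { q | ∃ u v : N.V, N.G.Adj u v ∧ q ∈ segment ℝ (pos u) (pos v) }

/-- A drawing of a split network: an injective placement of the vertices such that all
edges of any one class are realized by a common vector, up to sign. -/
def SplitNetwork.IsDrawing {α : Type} (N : SplitNetwork α) (pos : N.V → Plane) : Prop :=
  Function.Injective pos ∧
  ∀ i : Fin N.k, ∃ w : Plane, w ≠ 0 ∧
    ∀ u v : N.V, N.InClass i u v → pos u - pos v = w ∨ pos u - pos v = -w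

/-- `C` is a connected component of the set `s`. -/
def IsCompOf (C s : Set Plane) : Prop :=
  ∃ x ∈ s, C = connectedComponentIn s x

/-- A planar drawing: distinct edge segments meet only in common endpoints, all bounded
complementary components are strictly convex open sets, and the boundary of the unbounded
component contains a full edge segment from every class. -/
def SplitNetwork.IsPlanarDrawing {α : Type} (N : SplitNetwork α) (pos : N.V → Plane) :
    Prop :=
  N.IsDrawing pos ∧
  (∀ u v u' v' : N.V, N.G.Adj u v → N.G.Adj u' v' →
      segment ℝ (pos u) (pos v) ≠ segment ℝ (pos u') (pos v') →
      segment ℝ (pos u) (pos v) ∩ segment ℝ (pos u') (pos v') ⊆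
        ({pos u, pos v} ∩ {pos u', pos v'} : Set Plane)) ∧
  (∀ C : Set Plane, IsCompOf C (N.edgeSegs pos)ᶜ → Bornology.IsBounded C →
      IsOpen C ∧ StrictConvex ℝ C) ∧
  (∀ C : Set Plane, IsCompOf C (N.edgeSegs pos)ᶜ → ¬ Bornology.IsBounded C →
      ∀ i : Fin N.k, ∃ u v : N.V, N.InClass i u v ∧
        segment ℝ (pos u) (pos v) ⊆ frontier C)

/-- `S` has a planar split network representation: some planar split network labelled by
`α` induces every split of `S`. -/
def HasPlanarRep {α : Type} (S : Set (Set (Set α))) : Prop :=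
  ∃ N : SplitNetwork α, (∃ pos : N.V → Plane, N.IsPlanarDrawing pos) ∧
    S ⊆ N.inducedSplits

/-- The edge segments of class `i` lying on the boundary of a region `F`. -/
def SplitNetwork.boundarySegs {α : Type} (N : SplitNetwork α) (pos : N.V → Plane)
    (i : Fin N.k) (F : Set Plane) : Set (Set Plane) :=
  { s | ∃ u v : N.V, N.InClass i u v ∧ s = segment ℝ (pos u) (pos v) ∧ s ⊆ frontier F }
/-- Four distinct points in the plane, separated by any finite family of affine lines
avoiding the points, are divided into at most 6 distinct proper splits. -/
theorem affine_lines_induce_at_most_six_splits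
    (p : Fin 4 → Plane) (hp : Function.Injective p)
    (L : Finset ((Plane →ₗ[ℝ] ℝ) × ℝ)) (hL : ∀ l ∈ L, l.1 ≠ 0)
    (havoid : ∀ l ∈ L, ∀ i : Fin 4, l.1 (p i) ≠ l.2) :
    Set.ncard { s : Set (Set (Fin 4)) | ∃ l ∈ L,
        {i : Fin 4 | l.2 < l.1 (p i)}.Nonempty ∧
        {i : Fin 4 | l.1 (p i) < l.2}.Nonempty ∧
        s = {{i : Fin 4 | l.2 < l.1 (p i)}, {i : Fin 4 | l.1 (p i) < l.2}} } ≤ 6 := by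
  
  classical
  -- Four points in the plane are affinely dependent
  have hnotAI : ¬ AffineIndependent ℝ p := by
    intro h
    have h4 := h.card_le_finrank_succ
    have hle : Module.finrank ℝ (vectorSpan ℝ (Set.range p)) ≤ Module.finrank ℝ Plane :=
      Submodule.finrank_le _
    have hfr : Module.finrank ℝ Plane = 2 := by
      simp [Plane, Module.finrank_prod]
    simp only [Fintype.card_fin] at h4
    omega
  obtain ⟨R, x, hxR, hxRc⟩ := Convex.radon_partition (𝕜 := ℝ) hnotAI
  have hRne : R.Nonempty := by
    rcases (convexHull_nonempty_iff.mp ⟨x, hxR⟩) with ⟨y, i, hi, rfl⟩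
    exact ⟨i, hi⟩
  have hRcne : Rᶜ.Nonempty := by
    rcases (convexHull_nonempty_iff.mp ⟨x, hxRc⟩) with ⟨y, i, hi, rfl⟩
    exact ⟨i, hi⟩
  -- the representative of the Radon split containing 0
  set R' : Set (Fin 4) := if (0 : Fin 4) ∈ R then R else Rᶜ with hR'def
  have hxR' : x ∈ convexHull ℝ (p '' R') ∧ x ∈ convexHull ℝ (p '' R'ᶜ) := by
    by_cases h0 : (0 : Fin 4) ∈ R
    · simp only [hR'def, if_pos h0]; exact ⟨hxR, hxRc⟩
    · simp only [hR'def, if_neg h0, compl_compl]; exact ⟨hxRc, hxR⟩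
  have h0R' : (0 : Fin 4) ∈ R' := by
    by_cases h0 : (0 : Fin 4) ∈ R
    · simp [hR'def, h0]
    · simp [hR'def, h0]
  have hR'univ : R' ≠ Set.univ := by
    intro h
    have : R'ᶜ.Nonempty := by
      by_cases h0 : (0 : Fin 4) ∈ R
      · simpa [hR'def, h0] using hRcne
      · simpa [hR'def, h0, compl_compl] using hRne
    rw [h, compl_univ] at this
    exact this.ne_empty rfl
  -- the explicit 7-element superset of representatives
  set E : Set (Set (Fin 4)) :=
    {{0}, {0,1}, {0,2}, {0,3}, {0,1,2}, {0,1,3}, {0,2,3}} with hEdef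
  have hEsub : ∀ A : Set (Fin 4), (0 : Fin 4) ∈ A → A ≠ Set.univ → A ∈ E := by
    intro A h0 hA
    by_cases h1 : (1 : Fin 4) ∈ A <;> by_cases h2 : (2 : Fin 4) ∈ A <;>
      by_cases h3 : (3 : Fin 4) ∈ A
    · exact absurd (by ext i; fin_cases i <;> simp [h0, h1, h2, h3]) hA
    · have : A = {0,1,2} := by ext i; fin_cases i <;> simp [h0, h1, h2, h3]
      simp [hEdef, this]
    · have : A = {0,1,3} := by ext i; fin_cases i <;> simp [h0, h1, h2, h3]
      simp [hEdef, this]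
    · have : A = {0,1} := by ext i; fin_cases i <;> simp [h0, h1, h2, h3]
      simp [hEdef, this]
    · have : A = {0,2,3} := by ext i; fin_cases i <;> simp [h0, h1, h2, h3]
      simp [hEdef, this]
    · have : A = {0,2} := by ext i; fin_cases i <;> simp [h0, h1, h2, h3]
      simp [hEdef, this]
    · have : A = {0,3} := by ext i; fin_cases i <;> simp [h0, h1, h2, h3]
      simp [hEdef, this]
    · have : A = {0} := by ext i; fin_cases i <;> simp [h0, h1, h2, h3]
      simp [hEdef, this]
  have hEfin : E.Finite := (Set.finite_singleton _).insert _ |>.insert _ |>.insert _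
    |>.insert _ |>.insert _ |>.insert _
  have hR'E : R' ∈ E := hEsub R' h0R' hR'univ
  -- the target set of representatives
  set T : Set (Set (Fin 4)) := E \ {R'} with hTdef
  have hTcard : T.ncard ≤ 6 := by
    have h1 : T.ncard = E.ncard - 1 := Set.ncard_diff_singleton_of_mem hR'E
    have h2 : E.ncard ≤ 7 := by
      refine (Set.ncard_insert_le _ _).trans (Nat.add_le_add_right ?_ 1)
      refine (Set.ncard_insert_le _ _).trans (Nat.add_le_add_right ?_ 1)
      refine (Set.ncard_insert_le _ _).trans (Nat.add_le_add_right ?_ 1)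
      refine (Set.ncard_insert_le _ _).trans (Nat.add_le_add_right ?_ 1)
      refine (Set.ncard_insert_le _ _).trans (Nat.add_le_add_right ?_ 1)
      refine (Set.ncard_insert_le _ _).trans (Nat.add_le_add_right ?_ 1)
      exact (Set.ncard_singleton _).le
    omega
  -- main subset claim
  have hmain : { s : Set (Set (Fin 4)) | ∃ l ∈ L,
        {i : Fin 4 | l.2 < l.1 (p i)}.Nonempty ∧
        {i : Fin 4 | l.1 (p i) < l.2}.Nonempty ∧
        s = {{i : Fin 4 | l.2 < l.1 (p i)}, {i : Fin 4 | l.1 (p i) < l.2}} } ⊆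
      (fun A => ({A, Aᶜ} : Set (Set (Fin 4)))) '' T := by
    rintro s ⟨l, hl, hAne, hBne, rfl⟩
    set A : Set (Fin 4) := {i : Fin 4 | l.2 < l.1 (p i)} with hAdef
    set B : Set (Fin 4) := {i : Fin 4 | l.1 (p i) < l.2} with hBdef
    have hBA : B = Aᶜ := by
      ext i
      simp only [hAdef, hBdef, Set.mem_setOf_eq, Set.mem_compl_iff, not_lt]
      constructor
      · intro h; exact le_of_lt h
      · intro h; exact lt_of_le_of_ne h (havoid l hl i)
    -- a point in the hull of a positive-side subset is on the positive side, etc.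
    have hpos : ∀ C : Set (Fin 4), x ∈ convexHull ℝ (p '' C) →
        (∀ i ∈ C, l.2 < l.1 (p i)) → l.2 < l.1 x := by
      intro C hx hC
      have : convexHull ℝ (p '' C) ⊆ {y : Plane | l.2 < l.1 y} := by
        apply convexHull_min
        · rintro y ⟨i, hi, rfl⟩; exact hC i hi
        · exact convex_halfSpace_gt (LinearMap.isLinear l.1) l.2
      exact this hx
    have hneg : ∀ C : Set (Fin 4), x ∈ convexHull ℝ (p '' C) →
        (∀ i ∈ C, l.1 (p i) < l.2) → l.1 x < l.2 := by
      intro C hx hC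
      have : convexHull ℝ (p '' C) ⊆ {y : Plane | l.1 y < l.2} := by
        apply convexHull_min
        · rintro y ⟨i, hi, rfl⟩; exact hC i hi
        · exact convex_halfSpace_lt (LinearMap.isLinear l.1) l.2
      exact this hx
    have hApos : ∀ i ∈ A, l.2 < l.1 (p i) := fun i hi => hi
    have hAneg : ∀ i ∈ Aᶜ, l.1 (p i) < l.2 := fun i hi => by rw [← hBA] at hi; exact hi
    by_cases h0 : (0 : Fin 4) ∈ A
    · refine ⟨A, ⟨hEsub A h0 ?_, ?_⟩, by rw [hBA]⟩
      · intro h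
        rcases hBne with ⟨i, hi⟩
        have : i ∈ Aᶜ := by rw [← hBA]; exact hi
        rw [h] at this; exact this (Set.mem_univ i)
      · simp only [Set.mem_singleton_iff]
        intro h
        rw [h] at hApos hAneg
        exact absurd (hneg _ hxR'.2 hAneg) (not_lt.mpr (le_of_lt (hpos _ hxR'.1 hApos)))
    · refine ⟨Aᶜ, ⟨hEsub Aᶜ h0 ?_, ?_⟩, ?_⟩
      · intro h
        rcases hAne with ⟨i, hi⟩
        have : i ∈ Aᶜᶜ := by rw [compl_compl]; exact hi
        rw [h] at this; exact this (Set.mem_univ i)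
      · simp only [Set.mem_singleton_iff]
        intro h
        have hA : A = R'ᶜ := by rw [← h, compl_compl]
        rw [h] at hAneg
        rw [hA] at hApos
        exact absurd (hneg _ hxR'.1 hAneg) (not_lt.mpr (le_of_lt (hpos _ hxR'.2 hApos)))
      · show ({Aᶜ, Aᶜᶜ} : Set (Set (Fin 4))) = _
        rw [compl_compl, hBA]
        exact Set.pair_comm _ _
  calc Set.ncard _ ≤ ((fun A => ({A, Aᶜ} : Set (Set (Fin 4)))) '' T).ncard :=
        Set.ncard_le_ncard hmain ((hEfin.subset Set.diff_subset).image _)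
    _ ≤ T.ncard := Set.ncard_image_le (hEfin.subset Set.diff_subset)
    _ ≤ 6 := hTcard
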